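/- arXiv:2004.07383 — 3 statements merged into one kernel-verified Lean document; each statement's English description precedes it below -/
import Mathlib

section
/- Let G = (V, E) be a connected simple graph on a finite set V, let T(G) be the terrain induced by G, and let P be a partition of V conforming to T(G) with at least 3 parts. Then there exists a partition P′ of V conforming to T(G) that is a coarsening of P; in particular, P is not maximally coarse. -/
/-- A set of vertices is connected in `G` if the induced subgraph is connected
(this includes nonemptiness). -/
def ConnectedIn {V : Type*} (G : SimpleGraph V) (A : Set V) : Prop :=
  (G.induce A).Connected

/-- The terrain induced by `G`: all vertex sets that are connected in `G`
and are not the full vertex set. -/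
def InducedTerrain {V : Type*} (G : SimpleGraph V) : Set (Set V) :=
  {A | ConnectedIn G A ∧ A ≠ Set.univ}

/-- A partition conforms to the terrain induced by `G` if all its parts lie in it. -/
def Conforms {V : Type*} (G : SimpleGraph V) (P : Set (Set V)) : Prop :=
  ∀ p ∈ P, p ∈ InducedTerrain G

/-- `P₁` is a coarsening of `P₂`: strictly fewer parts, and every part of `P₂`
is contained in some part of `P₁`. -/
def Coarsening {V : Type*} (P₁ P₂ : Set (Set V)) : Prop :=
  P₁.ncard < P₂.ncard ∧ ∀ p ∈ P₂, ∃ q ∈ P₁, p ⊆ q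

lemma walk_boundary {V : Type*} {G : SimpleGraph V} {s : Set V} :
    ∀ {u v : V}, G.Walk u v → u ∈ s → v ∉ s → ∃ a ∈ s, ∃ b ∉ s, G.Adj a b := by
  intro u v w
  induction w with
  | nil => intro h h'; exact absurd h h'
  | @cons a b c hab _ ih =>
    intro ha hc
    by_cases hb : b ∈ s
    · exact ih hb hc
    · exact ⟨a, ha, b, hb, hab⟩

lemma exists_boundary_adj {V : Type*} {G : SimpleGraph V} (hG : G.Connected)
    {s : Set V} (hne : s.Nonempty) (hs : s ≠ Set.univ) :
    ∃ a ∈ s, ∃ b ∉ s, G.Adj a b := by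
  obtain ⟨u, hu⟩ := hne
  obtain ⟨v, hv⟩ : ∃ v, v ∉ s := by
    by_contra h; push_neg at h; exact hs (Set.eq_univ_of_forall h)
  exact walk_boundary (hG u v).some hu hv


/-- A conforming partition with at least 3 parts admits a conforming coarsening,
so it is not maximally coarse. -/
theorem conforming_partition_of_three_parts_not_maximally_coarse
    {V : Type*} [Fintype V] (G : SimpleGraph V) (hG : G.Connected)
    (P : Set (Set V)) (hP : Setoid.IsPartition P) (hconf : Conforms G P)
    (h3 : 3 ≤ P.ncard) :
    (∃ P' : Set (Set V), Setoid.IsPartition P' ∧ Conforms G P' ∧ Coarsening P' P) ∧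
    ¬ (∀ Q : Set (Set V), Setoid.IsPartition Q → Conforms G Q → ¬ Coarsening Q P) := by
  classical
  suffices main : ∃ P' : Set (Set V),
      Setoid.IsPartition P' ∧ Conforms G P' ∧ Coarsening P' P by
    refine ⟨main, fun h => ?_⟩
    obtain ⟨P', h1, h2, h3⟩ := main
    exact h P' h1 h2 h3
  have hPfin : P.Finite := Set.toFinite P
  -- pick a part p
  obtain ⟨p, hp⟩ : P.Nonempty := by
    rw [← Set.ncard_pos hPfin]; omega
  have hpne : p.Nonempty := Set.nonempty_iff_ne_empty.mpr (fun h => hP.1 (h ▸ hp))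
  obtain ⟨hpc, hpuniv⟩ := hconf p hp
  obtain ⟨a, ha, b, hb, hab⟩ := exists_boundary_adj hG hpne hpuniv
  -- the part q containing b
  obtain ⟨q, ⟨hq, hbq⟩, huq⟩ := hP.2 b
  have hqp : q ≠ p := fun h => hb (h ▸ hbq)
  obtain ⟨hqc, _⟩ := hconf q hq
  set m : Set V := p ∪ q with hm
  set P' : Set (Set V) := insert m (P \ {p, q}) with hP'
  -- uniqueness of parts in P
  have uniq : ∀ {x : V} {r r' : Set V}, r ∈ P → x ∈ r → r' ∈ P → x ∈ r' → r = r' := by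
    intro x r r' h1 h2 h3 h4
    obtain ⟨s, _, hs⟩ := hP.2 x
    rw [hs r ⟨h1, h2⟩, hs r' ⟨h3, h4⟩]
  -- a third part exists
  have hsub : {p, q} ⊆ P := by
    intro x hx; rcases hx with h | h
    · exact h ▸ hp
    · exact h ▸ hq
  have hpair : ({p, q} : Set (Set V)).ncard = 2 := Set.ncard_pair (Ne.symm hqp)
  have hdiff : (P \ {p, q}).ncard = P.ncard - 2 := by
    rw [Set.ncard_diff hsub (Set.toFinite _), hpair]
  obtain ⟨r, hr⟩ : (P \ {p, q}).Nonempty := by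
    rw [← Set.ncard_pos hPfin.diff]; omega
  have hrP : r ∈ P := hr.1
  have hrp : r ≠ p := fun h => hr.2 (by simp [h])
  have hrq : r ≠ q := fun h => hr.2 (by simp [h])
  obtain ⟨x, hx⟩ : r.Nonempty := Set.nonempty_iff_ne_empty.mpr (fun h => hP.1 (h ▸ hrP))
  have hxm : x ∉ m := by
    rintro (h | h)
    · exact hrp (uniq hrP hx hp h)
    · exact hrq (uniq hrP hx hq h)
  -- m is in the terrain
  have hmter : m ∈ InducedTerrain G := by
    refine ⟨SimpleGraph.connected_induce_union (SimpleGraph.Connected.preconnected hpc) (SimpleGraph.Connected.preconnected hqc) ha hbq hab, ?_⟩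
    intro h
    exact hxm (h ▸ Set.mem_univ x)
  -- P' is a partition
  have hpart : Setoid.IsPartition P' := by
    constructor
    · rintro (h | h)
      · have hma : a ∈ m := Set.mem_union_left _ ha
        rw [← h] at hma
        exact absurd hma (Set.notMem_empty a)
      · exact hP.1 h.1
    · intro y
      obtain ⟨s, ⟨hsP, hys⟩, hsu⟩ := hP.2 y
      by_cases hspq : s = p ∨ s = q
      · refine ⟨m, ⟨Set.mem_insert _ _, ?_⟩, ?_⟩
        · rcases hspq with h | h
          · exact Or.inl (h ▸ hys)
          · exact Or.inr (h ▸ hys)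
        · rintro c ⟨hc | hc, hyc⟩
          · exact hc
          · rcases hyc with _
            have := uniq hc.1 hyc hsP hys
            exfalso
            rcases hspq with h | h
            · exact hc.2 (Or.inl (this.trans h))
            · exact hc.2 (Or.inr (this.trans h))
      · push_neg at hspq
        refine ⟨s, ⟨Set.mem_insert_of_mem _ ⟨hsP, ?_⟩, hys⟩, ?_⟩
        · rintro (h | h)
          · exact hspq.1 h
          · exact hspq.2 h
        · rintro c ⟨hc | hc, hyc⟩
          · exfalso
            rcases hc ▸ hyc with h | h
            · exact hspq.1 (uniq hsP hys hp h)
            · exact hspq.2 (uniq hsP hys hq h)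
          · exact uniq hc.1 hyc hsP hys
  refine ⟨P', hpart, ?_, ?_, ?_⟩
  · rintro c (hc | hc)
    · exact hc ▸ hmter
    · exact hconf c hc.1
  · -- ncard
    calc P'.ncard ≤ (P \ {p, q}).ncard + 1 := Set.ncard_insert_le _ _
      _ = P.ncard - 2 + 1 := by rw [hdiff]
      _ < P.ncard := by omega
  · intro c hc
    by_cases hcpq : c = p ∨ c = q
    · refine ⟨m, Set.mem_insert _ _, ?_⟩
      rcases hcpq with h | h
      · exact h ▸ Set.subset_union_left
      · exact h ▸ Set.subset_union_right
    · push_neg at hcpq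
      exact ⟨c, Set.mem_insert_of_mem _ ⟨hc, by rintro (h | h); exacts [hcpq.1 h, hcpq.2 h]⟩,
        subset_rfl⟩
end

section
/- Let m ≥ 2 and let P_m be the path graph on {0, 1, ..., m−1}. A partition of {0, 1, ..., m−1} conforming to the terrain T(P_m) induced by P_m is maximally coarse if and only if it equals {{0, ..., k}, {k+1, ..., m−1}} for some 0 ≤ k ≤ m−2. Consequently, there are exactly m−1 maximally coarse conforming partitions. -/
/-- The path graph on `{0, 1, ..., m-1}`: `i` and `j` are adjacent iff `|i - j| = 1`. -/
def pathG (m : ℕ) : SimpleGraph (Fin m) where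
  Adj i j := (i : ℕ) + 1 = j ∨ (j : ℕ) + 1 = i
  symm := ⟨by intro i j h; tauto⟩
  loopless := ⟨by intro i h; rcases h with h | h <;> omega⟩

lemma mem_of_walk {m : ℕ} {A : Set (Fin m)} :
    ∀ {x y : A} (_ : ((pathG m).induce A).Walk x y) (z : Fin m),
      ((x:Fin m).val ≤ z.val ∧ z.val ≤ (y:Fin m).val ∨
       (y:Fin m).val ≤ z.val ∧ z.val ≤ (x:Fin m).val) → z ∈ A := by
  intro x y w
  induction w with
  | @nil u =>
    intro z hz
    have : z = (u : Fin m) := Fin.ext (by omega)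
    exact this ▸ u.2
  | @cons u v y h p ih =>
    intro z hz
    have h' : ((u:Fin m):ℕ) + 1 = ((v:Fin m):ℕ) ∨ ((v:Fin m):ℕ) + 1 = ((u:Fin m):ℕ) := h
    by_cases he : z.val = ((u:Fin m)).val
    · have : z = (u : Fin m) := Fin.ext he
      exact this ▸ u.2
    · exact ih z (by omega)

lemma reach_aux {m : ℕ} {A : Set (Fin m)}
    (hA : ∀ x ∈ A, ∀ y ∈ A, ∀ z : Fin m, x ≤ z → z ≤ y → z ∈ A) :
    ∀ (n : ℕ) (u v : A), (v:Fin m).val - (u:Fin m).val = n → (u:Fin m).val ≤ (v:Fin m).val →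
      ((pathG m).induce A).Reachable u v := by
  intro n
  induction n with
  | zero =>
    intro u v h1 h2
    have : u = v := Subtype.ext (Fin.ext (by omega))
    exact this ▸ SimpleGraph.Reachable.refl u
  | succ k ih =>
    intro u v h1 h2
    have hv : (u:Fin m).val + 1 < m := by have := ((v:Fin m)).isLt; omega
    have hwA : (⟨(u:Fin m).val + 1, hv⟩ : Fin m) ∈ A :=
      hA _ u.2 _ v.2 _ (by simp [Fin.le_def]) (by rw [Fin.le_def]; show (u:Fin m).val + 1 ≤ (v:Fin m).val; omega)
    have hadj : ((pathG m).induce A).Adj u ⟨⟨(u:Fin m).val + 1, hv⟩, hwA⟩ := by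
      show ((u:Fin m):ℕ) + 1 = _ ∨ _
      left; rfl
    exact (hadj.reachable).trans (ih ⟨_, hwA⟩ v (by simp; omega) (by show (u:Fin m).val + 1 ≤ (v:Fin m).val; omega))

lemma ConnectedIn_iff {m : ℕ} (A : Set (Fin m)) :
    ((pathG m).induce A).Connected ↔
      A.Nonempty ∧ ∀ x ∈ A, ∀ y ∈ A, ∀ z : Fin m, x ≤ z → z ≤ y → z ∈ A := by
  constructor
  · intro hc
    obtain ⟨⟨a, ha⟩⟩ := hc.nonempty
    refine ⟨⟨a, ha⟩, fun x hx y hy z h1 h2 => ?_⟩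
    obtain ⟨w⟩ := hc.preconnected ⟨x, hx⟩ ⟨y, hy⟩
    exact mem_of_walk w z (Or.inl ⟨h1, h2⟩)
  · rintro ⟨⟨a, ha⟩, hA⟩
    rw [SimpleGraph.connected_iff]
    refine ⟨fun u v => ?_, ⟨⟨a, ha⟩⟩⟩
    rcases le_total ((u:Fin m).val) ((v:Fin m).val) with h | h
    · exact reach_aux hA _ u v rfl h
    · exact (reach_aux hA _ v u rfl h).symm

section Parts

variable {m : ℕ} {P : Set (Set (Fin m))}

lemma part_eq (hP : Setoid.IsPartition P) {p q : Set (Fin m)}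
    (hp : p ∈ P) (hq : q ∈ P) {x : Fin m} (hxp : x ∈ p) (hxq : x ∈ q) : p = q := by
  obtain ⟨b, hb1, hb2⟩ := hP.2 x
  rw [hb2 p ⟨hp, hxp⟩, hb2 q ⟨hq, hxq⟩]

lemma part_nonempty (hP : Setoid.IsPartition P) {p : Set (Fin m)} (hp : p ∈ P) : p.Nonempty :=
  Set.nonempty_iff_ne_empty.mpr (fun h => hP.1 (h ▸ hp))

lemma exists_part (hP : Setoid.IsPartition P) (x : Fin m) : ∃ p ∈ P, x ∈ p :=
  (hP.2 x).exists

/-- Any conforming partition has at least two parts. -/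
lemma ncard_ge_two (hm : 2 ≤ m) (hP : Setoid.IsPartition P)
    (hC : Conforms (pathG m) P) : 2 ≤ P.ncard := by
  obtain ⟨p, hp, hz⟩ := exists_part hP ⟨0, by omega⟩
  have hpu : p ≠ Set.univ := (hC p hp).2
  obtain ⟨x, hx⟩ : ∃ x, x ∉ p := by
    by_contra h
    push_neg at h
    exact hpu (Set.eq_univ_of_forall h)
  obtain ⟨q, hq, hxq⟩ := exists_part hP x
  have : p ≠ q := fun h => hx (h ▸ hxq)
  have h1 : 1 < P.ncard := (Set.one_lt_ncard (Set.toFinite P)).mpr ⟨p, hp, q, hq, this⟩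
  omega

/-- The part containing `0` is `Iic a` for `a` its maximum. -/
lemma part_zero_iic (hm : 2 ≤ m) (hP : Setoid.IsPartition P)
    (hC : Conforms (pathG m) P) {p : Set (Fin m)} (hp : p ∈ P)
    (hz : (⟨0, by omega⟩ : Fin m) ∈ p) :
    ∃ a : Fin m, a ∈ p ∧ p = Set.Iic a ∧ (a : ℕ) + 1 < m := by
  have hconn := (ConnectedIn_iff p).mp (hC p hp).1
  obtain ⟨a, hap, hmax⟩ := Set.exists_max_image p id (Set.toFinite p) hconn.1
  refine ⟨a, hap, ?_, ?_⟩
  · apply Set.Subset.antisymm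
    · intro x hx; exact hmax x hx
    · intro x hx
      exact hconn.2 _ hz _ hap x (by simp [Fin.le_def]) hx
  · obtain ⟨x, hx⟩ : ∃ x, x ∉ p := by
      by_contra h
      push_neg at h
      exact (hC p hp).2 (Set.eq_univ_of_forall h)
    have hax : ¬ (x ≤ a) := by
      intro hxa
      exact hx (hconn.2 _ hz _ hap x (by simp [Fin.le_def]) hxa)
    rw [Fin.le_def, not_le] at hax
    have := x.isLt
    omega

/-- A conforming partition with at least three parts is not maximally coarse. -/
lemma not_max_of_three (hm : 2 ≤ m) (hP : Setoid.IsPartition P)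
    (hC : Conforms (pathG m) P) (h3 : 3 ≤ P.ncard) :
    ∃ Q : Set (Set (Fin m)), Setoid.IsPartition Q ∧ Conforms (pathG m) Q ∧ Coarsening Q P := by
  -- the part containing 0
  obtain ⟨A, hA, hz⟩ := exists_part hP ⟨0, by omega⟩
  obtain ⟨a, haA, hAiic, ham⟩ := part_zero_iic hm hP hC hA hz
  set a' : Fin m := ⟨(a:ℕ) + 1, ham⟩ with ha'
  obtain ⟨B, hB, ha'B⟩ := exists_part hP a'
  have ha'A : a' ∉ A := by
    rw [hAiic]
    intro h
    rw [Set.mem_Iic, Fin.le_def] at h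
    simp [a'] at h
  have hAB : A ≠ B := fun h => ha'A (h ▸ ha'B)
  -- B lies entirely above a
  have hBconn := (ConnectedIn_iff B).mp (hC B hB).1
  have hBgt : ∀ x ∈ B, (a:ℕ) < (x:ℕ) := by
    intro x hxB
    by_contra h
    push_neg at h
    have hxA : x ∈ A := by rw [hAiic]; exact Set.mem_Iic.mpr (by rw [Fin.le_def]; omega)
    exact hAB (part_eq hP hA hB hxA hxB)
  obtain ⟨b, hbB, hbmax⟩ := Set.exists_max_image B id (Set.toFinite B) hBconn.1
  -- A ∪ B = Iic b
  have hUnion : A ∪ B = Set.Iic b := by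
    apply Set.Subset.antisymm
    · rintro x (hx | hx)
      · rw [hAiic, Set.mem_Iic, Fin.le_def] at hx
        have h1 := hBgt a' ha'B
        have h2 : (a':ℕ) ≤ (b:ℕ) := hbmax a' ha'B
        exact Set.mem_Iic.mpr (by rw [Fin.le_def]; simp [a'] at h1 h2 ⊢; omega)
      · exact Set.mem_Iic.mpr (hbmax x hx)
    · intro x hx
      rw [Set.mem_Iic, Fin.le_def] at hx
      by_cases hxa : (x:ℕ) ≤ (a:ℕ)
      · exact Or.inl (by rw [hAiic]; exact Set.mem_Iic.mpr (by rw [Fin.le_def]; omega))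
      · refine Or.inr (hBconn.2 _ ha'B _ hbB x ?_ ?_)
        · rw [Fin.le_def]; simp [a']; omega
        · rw [Fin.le_def]; omega
  set Q : Set (Set (Fin m)) := insert (A ∪ B) (P \ {A, B}) with hQdef
  have hUnotin : (A ∪ B) ∉ P \ {A, B} := by
    rintro ⟨hU, hUn⟩
    have : A ∪ B = A := part_eq hP hU hA (Or.inl hz) hz
    exact ha'A (this ▸ (Or.inr ha'B : a' ∈ A ∪ B))
  -- Q is a partition
  have hQP : Setoid.IsPartition Q := by
    constructor
    · intro h
      rcases h with h | ⟨h, _⟩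
      · obtain ⟨c, hc⟩ := part_nonempty hP hA
        exact Set.notMem_empty c (h ▸ Set.mem_union_left B hc)
      · exact hP.1 h
    · intro x
      obtain ⟨p, hp, hxp⟩ := exists_part hP x
      by_cases hpAB : p = A ∨ p = B
      · refine ⟨A ∪ B, ⟨Or.inl rfl, ?_⟩, ?_⟩
        · rcases hpAB with h | h
          · exact Or.inl (h ▸ hxp)
          · exact Or.inr (h ▸ hxp)
        · rintro q ⟨hq, hxq⟩
          rcases hq with hq | ⟨hq, hqn⟩
          · exact hq
          · exfalso
            rcases hxq with hxq
            rcases (Or.inl rfl : q = q ∨ False) with _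
            -- q ∈ P \ {A,B}, x ∈ q, but x ∈ A ∪ B
            have hxU : x ∈ A ∪ B := by
              rcases hpAB with h | h
              · exact Or.inl (h ▸ hxp)
              · exact Or.inr (h ▸ hxp)
            rcases hxU with hxA | hxB
            · exact hqn (Or.inl (part_eq hP hq hA hxq hxA))
            · exact hqn (Or.inr (part_eq hP hq hB hxq hxB))
      · push_neg at hpAB
        refine ⟨p, ⟨Or.inr ⟨hp, by simp [hpAB.1, hpAB.2]⟩, hxp⟩, ?_⟩
        rintro q ⟨hq, hxq⟩
        rcases hq with hq | ⟨hq, _⟩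
        · exfalso
          rcases (hq ▸ hxq : x ∈ A ∪ B) with hxA | hxB
          · exact hpAB.1 (part_eq hP hp hA hxp hxA)
          · exact hpAB.2 (part_eq hP hp hB hxp hxB)
        · exact part_eq hP hq hp hxq hxp
  -- Q conforms
  have hQC : Conforms (pathG m) Q := by
    rintro q (hq | ⟨hq, _⟩)
    · subst hq
      constructor
      · rw [show (ConnectedIn (pathG m) (A ∪ B)) = ((pathG m).induce (A ∪ B)).Connected from rfl,
          ConnectedIn_iff]
        refine ⟨⟨a, Or.inl haA⟩, ?_⟩
        rw [hUnion]
        intro x _ y hy z _ h2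
        exact Set.mem_Iic.mpr (le_trans h2 hy)
      · -- not univ: there is a third part
        have hPfin : (P \ {A, B}).Finite := Set.toFinite _
        have hcard : 1 ≤ (P \ {A, B}).ncard := by
          have hABP : ({A, B} : Set (Set (Fin m))).ncard = 2 :=
            Set.ncard_pair hAB
          have : (P \ {A, B}).ncard = P.ncard - 2 := by
            rw [Set.ncard_diff (by rintro x (rfl | rfl) <;> assumption), hABP]
          omega
        obtain ⟨C, hC'⟩ := (Set.ncard_pos hPfin).mp (by omega)
        obtain ⟨c, hc⟩ := part_nonempty hP hC'.1
        intro h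
        have hcU : c ∈ A ∪ B := h ▸ Set.mem_univ c
        have hCn := hC'.2
        simp only [Set.mem_insert_iff, Set.mem_singleton_iff, not_or] at hCn
        rcases hcU with hcA | hcB
        · exact hCn.1 (part_eq hP hC'.1 hA hc hcA)
        · exact hCn.2 (part_eq hP hC'.1 hB hc hcB)
    · exact hC q hq
  refine ⟨Q, hQP, hQC, ?_, ?_⟩
  · -- ncard decreases
    have hdiff : (P \ {A, B}).ncard = P.ncard - 2 := by
      rw [Set.ncard_diff (by rintro x (rfl | rfl) <;> assumption),
        Set.ncard_pair hAB]
    have : Q.ncard = (P \ {A, B}).ncard + 1 :=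
      Set.ncard_insert_of_notMem hUnotin (Set.toFinite _)
    omega
  · intro p hp
    by_cases hpAB : p = A ∨ p = B
    · refine ⟨A ∪ B, Or.inl rfl, ?_⟩
      rcases hpAB with h | h
      · exact h ▸ Set.subset_union_left
      · exact h ▸ Set.subset_union_right
    · push_neg at hpAB
      exact ⟨p, Or.inr ⟨hp, by simp [hpAB.1, hpAB.2]⟩, subset_rfl⟩

/-- A conforming partition with exactly two parts has the required shape. -/
lemma two_parts_form (hm : 2 ≤ m) (hP : Setoid.IsPartition P)
    (hC : Conforms (pathG m) P) (h2 : P.ncard = 2) :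
    ∃ k : Fin m, (k : ℕ) ≤ m - 2 ∧ P = ({Set.Iic k, Set.Ioi k} : Set (Set (Fin m))) := by
  obtain ⟨A, hA, hz⟩ := exists_part hP ⟨0, by omega⟩
  obtain ⟨a, haA, hAiic, ham⟩ := part_zero_iic hm hP hC hA hz
  obtain ⟨s, t, hst, hPst⟩ := Set.ncard_eq_two.mp h2
  -- identify the other part
  have hAmem : A = s ∨ A = t := by
    have := hPst ▸ hA
    simpa using this
  obtain ⟨B, hBP, hABne, hPAB⟩ : ∃ B, B ∈ P ∧ A ≠ B ∧ P = {A, B} := by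
    rcases hAmem with h | h
    · exact ⟨t, by rw [hPst]; simp, by rw [h]; exact hst, by rw [hPst, h]⟩
    · refine ⟨s, by rw [hPst]; simp, by rw [h]; exact fun hh => hst hh.symm, ?_⟩
      rw [hPst, h]
      exact Set.pair_comm s t
  have hBIoi : B = Set.Ioi a := by
    apply Set.Subset.antisymm
    · intro x hxB
      by_contra h
      rw [Set.mem_Ioi, not_lt] at h
      have hxA : x ∈ A := hAiic ▸ Set.mem_Iic.mpr h
      exact hABne (part_eq hP hA hBP hxA hxB)
    · intro x hx
      rw [Set.mem_Ioi] at hx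
      obtain ⟨p, hp, hxp⟩ := exists_part hP x
      have : p = A ∨ p = B := by
        have := hPAB ▸ hp
        simpa using this
      rcases this with h | h
      · exfalso
        have : x ∈ Set.Iic a := hAiic ▸ h ▸ hxp
        exact absurd (Set.mem_Iic.mp this) (not_le.mpr hx)
      · exact h ▸ hxp
  exact ⟨a, by omega, by rw [hPAB, hAiic, hBIoi]⟩

/-- The canonical two-part partitions are partitions and conform. -/
lemma form_partition (hm : 2 ≤ m) (k : Fin m) (hk : (k : ℕ) ≤ m - 2) :
    Setoid.IsPartition ({Set.Iic k, Set.Ioi k} : Set (Set (Fin m))) ∧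
    Conforms (pathG m) ({Set.Iic k, Set.Ioi k} : Set (Set (Fin m))) ∧
    ({Set.Iic k, Set.Ioi k} : Set (Set (Fin m))).ncard = 2 := by
  have hk1 : (k : ℕ) + 1 < m := by omega
  set k' : Fin m := ⟨(k:ℕ) + 1, hk1⟩ with hk'
  have hkk' : k < k' := by rw [Fin.lt_def]; simp [k']
  have hne : (Set.Iic k : Set (Fin m)) ≠ Set.Ioi k := by
    intro h
    have : k ∈ Set.Ioi k := h ▸ Set.mem_Iic.mpr le_rfl
    exact lt_irrefl k (Set.mem_Ioi.mp this)
  refine ⟨⟨?_, ?_⟩, ?_, ?_⟩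
  · rintro (h | h)
    · exact absurd (h ▸ Set.mem_Iic.mpr (le_rfl : k ≤ k)) (Set.notMem_empty k)
    · rcases h with h
      exact absurd (h ▸ Set.mem_Ioi.mpr hkk') (Set.notMem_empty k')
  · intro x
    by_cases hx : x ≤ k
    · refine ⟨Set.Iic k, ⟨Or.inl rfl, Set.mem_Iic.mpr hx⟩, ?_⟩
      rintro q ⟨hq, hxq⟩
      rcases hq with h | h
      · exact h
      · exact absurd (Set.mem_Ioi.mp (h ▸ hxq)) (not_lt.mpr hx)
    · push_neg at hx
      refine ⟨Set.Ioi k, ⟨Or.inr rfl, Set.mem_Ioi.mpr hx⟩, ?_⟩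
      rintro q ⟨hq, hxq⟩
      rcases hq with h | h
      · exact absurd (Set.mem_Iic.mp (h ▸ hxq)) (not_le.mpr hx)
      · exact h
  · rintro q (h | h)
    · subst h
      constructor
      · rw [show (ConnectedIn (pathG m) (Set.Iic k)) =
            ((pathG m).induce (Set.Iic k)).Connected from rfl, ConnectedIn_iff]
        exact ⟨⟨k, Set.mem_Iic.mpr le_rfl⟩,
          fun x _ y hy z _ h2 => Set.mem_Iic.mpr (le_trans h2 hy)⟩
      · intro h
        have : k' ∈ Set.Iic k := h ▸ Set.mem_univ k'
        exact absurd (Set.mem_Iic.mp this) (not_le.mpr hkk')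
    · rcases h with h
      subst h
      constructor
      · rw [show (ConnectedIn (pathG m) (Set.Ioi k)) =
            ((pathG m).induce (Set.Ioi k)).Connected from rfl, ConnectedIn_iff]
        exact ⟨⟨k', Set.mem_Ioi.mpr hkk'⟩,
          fun x hx y _ z h1 _ => Set.mem_Ioi.mpr (lt_of_lt_of_le hx h1)⟩
      · intro h
        have hz : (⟨0, by omega⟩ : Fin m) ∈ Set.Ioi k := h ▸ Set.mem_univ _
        have := Set.mem_Ioi.mp hz
        simp [Fin.lt_def] at this
  · exact Set.ncard_pair hne

end Parts

/-- A conforming partition of the path graph is maximally coarse iff it is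
`{{0,...,k}, {k+1,...,m-1}}` for some `0 ≤ k ≤ m-2`; hence there are exactly
`m - 1` maximally coarse conforming partitions. -/
theorem pathGraph_maximally_coarse_iff (m : ℕ) (hm : 2 ≤ m) :
    (∀ P : Set (Set (Fin m)), Setoid.IsPartition P → Conforms (pathG m) P →
      ((∀ Q : Set (Set (Fin m)), Setoid.IsPartition Q → Conforms (pathG m) Q →
          ¬ Coarsening Q P) ↔
        ∃ k : Fin m, (k : ℕ) ≤ m - 2 ∧ P = ({Set.Iic k, Set.Ioi k} : Set (Set (Fin m))))) ∧
    {P : Set (Set (Fin m)) | Setoid.IsPartition P ∧ Conforms (pathG m) P ∧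
      ∀ Q : Set (Set (Fin m)), Setoid.IsPartition Q → Conforms (pathG m) Q →
        ¬ Coarsening Q P}.ncard = m - 1 := by
  have main : ∀ P : Set (Set (Fin m)), Setoid.IsPartition P → Conforms (pathG m) P →
      ((∀ Q : Set (Set (Fin m)), Setoid.IsPartition Q → Conforms (pathG m) Q →
          ¬ Coarsening Q P) ↔
        ∃ k : Fin m, (k : ℕ) ≤ m - 2 ∧ P = ({Set.Iic k, Set.Ioi k} : Set (Set (Fin m)))) := by
    intro P hP hC
    constructor
    · intro hmax
      have h2 : P.ncard = 2 := by
        have hge := ncard_ge_two hm hP hC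
        by_contra h
        have h3 : 3 ≤ P.ncard := by omega
        obtain ⟨Q, hQ1, hQ2, hQ3⟩ := not_max_of_three hm hP hC h3
        exact hmax Q hQ1 hQ2 hQ3
      exact two_parts_form hm hP hC h2
    · rintro ⟨k, hk, rfl⟩ Q hQ1 hQ2 ⟨hlt, _⟩
      have h2 := (form_partition hm k hk).2.2
      have := ncard_ge_two hm hQ1 hQ2
      omega
  refine ⟨main, ?_⟩
  -- count
  have hset : {P : Set (Set (Fin m)) | Setoid.IsPartition P ∧ Conforms (pathG m) P ∧
      ∀ Q : Set (Set (Fin m)), Setoid.IsPartition Q → Conforms (pathG m) Q →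
        ¬ Coarsening Q P} =
      (fun k : Fin m => ({Set.Iic k, Set.Ioi k} : Set (Set (Fin m)))) ''
        {k : Fin m | (k : ℕ) ≤ m - 2} := by
    ext P
    constructor
    · rintro ⟨h1, h2, h3⟩
      obtain ⟨k, hk, hPk⟩ := (main P h1 h2).mp h3
      exact ⟨k, hk, hPk.symm⟩
    · rintro ⟨k, hk, rfl⟩
      obtain ⟨hp1, hp2, _⟩ := form_partition hm k hk
      exact ⟨hp1, hp2, (main _ hp1 hp2).mpr ⟨k, hk, rfl⟩⟩
  rw [hset]
  have hz0 : (⟨0, by omega⟩ : Fin m) ∈ (Set.Iic (⟨0, by omega⟩ : Fin m)) := Set.mem_Iic.mpr le_rfl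
  have hinj : Set.InjOn (fun k : Fin m => ({Set.Iic k, Set.Ioi k} : Set (Set (Fin m))))
      {k : Fin m | (k : ℕ) ≤ m - 2} := by
    intro j _ k _ h
    simp only at h
    have hj : Set.Iic j ∈ ({Set.Iic k, Set.Ioi k} : Set (Set (Fin m))) := by
      rw [← h]; exact Or.inl rfl
    rcases hj with hj | hj
    · -- Iic j = Iic k
      have h1 : j ≤ k := Set.mem_Iic.mp (hj ▸ Set.mem_Iic.mpr (le_rfl : j ≤ j))
      have h2 : k ≤ j := Set.mem_Iic.mp (hj.symm ▸ Set.mem_Iic.mpr (le_rfl : k ≤ k))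
      exact le_antisymm h1 h2
    · exfalso
      rcases hj with hj
      have h0 : (⟨0, by omega⟩ : Fin m) ∈ Set.Iic j := by
        apply Set.mem_Iic.mpr
        rw [Fin.le_def]
        simp
      have := Set.mem_Ioi.mp (hj ▸ h0)
      simp [Fin.lt_def] at this
  rw [Set.ncard_image_of_injOn hinj]
  have : {k : Fin m | (k : ℕ) ≤ m - 2} = Set.Iic (⟨m - 2, by omega⟩ : Fin m) := by
    ext k
    simp [Set.mem_Iic, Fin.le_def]
  rw [this, ← Finset.coe_Iic, Set.ncard_coe_finset, Fin.card_Iic]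
  simp
  omega
end

section
/- Let V be a finite set and let A₁ and A₂ each be collections of proper nonempty subsets of V containing all singletons (terrains on V). Consider V = {Monkey, Chimp, Car, Truck, Dog, Wolf} and the terrain A consisting of all six singletons together with the sets {Monkey, Chimp}, {Car, Truck}, {Dog, Wolf}, and {Monkey, Chimp, Dog, Wolf}. Then there is no simple graph G on V for which A equals the collection of subsets of V that are connected in G and not equal to V (i.e., A is not the terrain induced by any graph on V). -/
/-- The six levels of the categorical variable in the paper's example. -/
inductive Animal : Type
  | Monkey | Chimp | Car | Truck | Dog | Wolf
  deriving DecidableEq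

open Animal in
/-- The terrain consisting of all singletons together with the "primates",
"vehicles", "canines", and "mammals". -/
def exampleTerrain : Set (Set Animal) :=
  {{Monkey}, {Chimp}, {Car}, {Truck}, {Dog}, {Wolf},
   {Monkey, Chimp}, {Car, Truck}, {Dog, Wolf},
   {Monkey, Chimp, Dog, Wolf}}


open Animal

instance : Fintype Animal :=
  ⟨⟨{Monkey, Chimp, Car, Truck, Dog, Wolf}, by decide⟩, by intro x; cases x <;> decide⟩

def isPrimate : Animal → Bool
  | Monkey => true | Chimp => true | _ => false

lemma pair_connectedIn {V : Type*} (G : SimpleGraph V) {a b : V} (h : G.Adj a b) :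
    ConnectedIn G {a, b} := by
  have hab : (G.induce {a,b}).Adj ⟨a, by simp⟩ ⟨b, by simp⟩ := by
    simp [SimpleGraph.comap_adj, h]
  constructor
  · rintro ⟨u, hu⟩ ⟨v, hv⟩
    rcases hu with rfl | rfl <;> rcases hv with rfl | rfl
    · rfl
    · exact hab.reachable
    · exact hab.symm.reachable
    · rfl

set_option synthInstance.maxSize 1000 in
set_option maxHeartbeats 1000000 in
lemma cross_pair_not_mem (a b : Animal) (hab : isPrimate a ≠ isPrimate b) :
    ({a, b} : Set Animal) ∉ exampleTerrain := by
  simp only [exampleTerrain, Set.mem_insert_iff, Set.mem_singleton_iff, Set.ext_iff]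
  revert hab
  revert a b
  decide

/-- The example terrain is not the terrain induced by any graph on `Animal`. -/
theorem exampleTerrain_not_induced_by_graph :
    ¬ ∃ G : SimpleGraph Animal, exampleTerrain = InducedTerrain G := by
  rintro ⟨G, h⟩
  set S : Set Animal := {Monkey, Chimp, Dog, Wolf} with hSdef
  have hSmem : S ∈ exampleTerrain := by simp [exampleTerrain, hSdef]
  have hS : ConnectedIn G S := (h ▸ hSmem).1
  have hcross : ∀ a b : Animal, a ∈ S → b ∈ S → G.Adj a b →
      isPrimate a = isPrimate b := by
    intro a b ha hb hadj
    by_contra hne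
    have hmem : ({a, b} : Set Animal) ∈ InducedTerrain G := by
      refine ⟨pair_connectedIn G hadj, ?_⟩
      intro he
      have hc : Car ∈ ({a, b} : Set Animal) := he ▸ Set.mem_univ Car
      rcases hc with rfl | rfl
      · simp [hSdef] at ha
      · simp [hSdef] at hb
    rw [← h] at hmem
    exact cross_pair_not_mem a b hne hmem
  have key : ∀ (u v : ↥S) (p : (G.induce S).Walk u v), isPrimate u.1 = isPrimate v.1 := by
    intro u v p
    induction p with
    | nil => rfl
    | cons hadj _ ih =>
      rename_i x y z _
      have : G.Adj x.1 y.1 := hadj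
      exact (hcross _ _ x.2 y.2 this).trans ih
  have hM : Monkey ∈ S := by simp [hSdef]
  have hD : Dog ∈ S := by simp [hSdef]
  obtain ⟨p⟩ := hS.preconnected ⟨Monkey, hM⟩ ⟨Dog, hD⟩
  simpa [isPrimate] using key _ _ p
end
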